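/- If m ≥ 1 and n ≥ 2 are integers with n ≡ 2 (mod 3), then the bondage number of K_m ⊠ P_n satisfies b(K_m ⊠ P_n) ≤ m. -/

import Mathlib

open SimpleGraph Finset

/-- `D` is a dominating set of `G`: every vertex is in `D` or adjacent to a vertex of `D`. -/
def SimpleGraph.IsDominatingSet {V : Type*} (G : SimpleGraph V) (D : Set V) : Prop :=
  ∀ v : V, v ∈ D ∨ ∃ u ∈ D, G.Adj u v

/-- The domination number of a finite graph. -/
noncomputable def SimpleGraph.dominationNumber {V : Type*} [Fintype V]
    (G : SimpleGraph V) : ℕ :=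
  sInf {k | ∃ D : Finset V, D.card = k ∧ G.IsDominatingSet ↑D}

/-- The bondage number of a finite graph: the least size of a set of edges whose removal
increases the domination number. -/
noncomputable def SimpleGraph.bondageNumber {V : Type*} [Fintype V]
    (G : SimpleGraph V) : ℕ :=
  sInf {k | ∃ Z : Finset (Sym2 V), Z.card = k ∧ (↑Z : Set (Sym2 V)) ⊆ G.edgeSet ∧
    G.dominationNumber < (G.deleteEdges ↑Z).dominationNumber}

/-- The strong product of two simple graphs. -/
def SimpleGraph.strongProd {V W : Type*} (G : SimpleGraph V) (H : SimpleGraph W) :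
    SimpleGraph (V × W) :=
  SimpleGraph.fromRel (fun a b =>
    (a.1 = b.1 ∧ H.Adj a.2 b.2) ∨ (G.Adj a.1 b.1 ∧ a.2 = b.2) ∨
      (G.Adj a.1 b.1 ∧ H.Adj a.2 b.2))

infixl:70 " ⊠ " => SimpleGraph.strongProd

lemma strong_adj {m n : ℕ} {a b : Fin m × Fin n} :
    ((⊤ : SimpleGraph (Fin m)) ⊠ pathGraph n).Adj a b ↔
      a ≠ b ∧ ((a.2 : ℕ) = b.2 ∨ (a.2 : ℕ) + 1 = b.2 ∨ (b.2 : ℕ) + 1 = a.2) := by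
  constructor
  · rintro ⟨hne, h | h⟩ <;>
    · refine ⟨hne, ?_⟩
      rcases h with ⟨_, h2⟩ | ⟨_, h2⟩ | ⟨_, h2⟩
      · rcases pathGraph_adj.1 h2 with h | h <;> omega
      · simp [h2]
      · rcases pathGraph_adj.1 h2 with h | h <;> omega
  · rintro ⟨hne, hcol⟩
    refine ⟨hne, ?_⟩
    by_cases hc : (a.2 : ℕ) = b.2
    · have h2 : a.2 = b.2 := Fin.ext hc
      have h1 : a.1 ≠ b.1 := fun h => hne (Prod.ext h h2)
      exact Or.inl (Or.inr (Or.inl ⟨h1, h2⟩))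
    · have hp : (pathGraph n).Adj a.2 b.2 := pathGraph_adj.2 (by omega)
      by_cases h1 : a.1 = b.1
      · exact Or.inl (Or.inl ⟨h1, hp⟩)
      · exact Or.inl (Or.inr (Or.inr ⟨h1, hp⟩))

def delZ (m n : ℕ) (hn : 2 ≤ n) : Finset (Sym2 (Fin m × Fin n)) :=
  univ.image (fun i : Fin m => s((i, (⟨0, by omega⟩ : Fin n)), (i, (⟨1, by omega⟩ : Fin n))))

lemma mem_delZ {m n : ℕ} (hn : 2 ≤ n) {a b : Fin m × Fin n} :
    s(a, b) ∈ delZ m n hn ↔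
      a.1 = b.1 ∧ (((a.2 : ℕ) = 0 ∧ (b.2 : ℕ) = 1) ∨ ((a.2 : ℕ) = 1 ∧ (b.2 : ℕ) = 0)) := by
  simp only [delZ, mem_image, mem_univ, true_and]
  constructor
  · rintro ⟨i, hi⟩
    rw [Sym2.eq_iff] at hi
    rcases hi with ⟨h1, h2⟩ | ⟨h1, h2⟩ <;>
      simp [← h1, ← h2]
  · rintro ⟨h1, h2 | h2⟩
    · refine ⟨a.1, ?_⟩
      rw [Sym2.eq_iff]
      left
      constructor
      · exact Prod.ext rfl (Fin.ext (by simp [h2.1]))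
      · exact Prod.ext h1 (Fin.ext (by simp [h2.2]))
    · refine ⟨a.1, ?_⟩
      rw [Sym2.eq_iff]
      right
      constructor
      · exact Prod.ext h1 (Fin.ext (by simp [h2.2]))
      · exact Prod.ext rfl (Fin.ext (by simp [h2.1]))

lemma G'_adj {m n : ℕ} (hn : 2 ≤ n) {a b : Fin m × Fin n} :
    (((⊤ : SimpleGraph (Fin m)) ⊠ pathGraph n).deleteEdges ↑(delZ m n hn)).Adj a b ↔
      a ≠ b ∧ ((a.2 : ℕ) = b.2 ∨ (a.2 : ℕ) + 1 = b.2 ∨ (b.2 : ℕ) + 1 = a.2) ∧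
        ¬(a.1 = b.1 ∧ (((a.2 : ℕ) = 0 ∧ (b.2 : ℕ) = 1) ∨ ((a.2 : ℕ) = 1 ∧ (b.2 : ℕ) = 0))) := by
  rw [deleteEdges_adj, strong_adj]
  simp only [Finset.mem_coe, mem_delZ hn]
  tauto

lemma count_lemma {α : Type*} [DecidableEq α] (B : Finset α) (p : α → ℕ) (lo hi : ℕ)
    (H : ∀ c, lo ≤ c → c ≤ hi → ∃ d ∈ B, c ≤ p d + 1 ∧ p d ≤ c + 1) :
    hi + 1 - lo ≤ 3 * B.card := by
  rcases le_or_gt lo hi with hle | hlt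
  swap
  · omega
  obtain ⟨d0, hd0, _⟩ := H lo le_rfl hle
  classical
  set f : ℕ → α × ℕ := fun c =>
    if h : lo ≤ c ∧ c ≤ hi then
      ((H c h.1 h.2).choose, p (H c h.1 h.2).choose + 1 - c)
    else (d0, 0) with hf
  have key : ∀ c ∈ Finset.Icc lo hi, (f c).1 ∈ B ∧ c ≤ p (f c).1 + 1 ∧ p (f c).1 ≤ c + 1
      ∧ (f c).2 = p (f c).1 + 1 - c := by
    intro c hc
    rw [Finset.mem_Icc] at hc
    simp only [hf, dif_pos hc]
    obtain ⟨h1, h2, h3⟩ := (H c hc.1 hc.2).choose_spec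
    exact ⟨h1, h2, h3, trivial⟩
  have hcard := Finset.card_le_card_of_injOn f (s := Finset.Icc lo hi)
    (t := B ×ˢ Finset.range 3) ?_ ?_
  · rw [Nat.card_Icc] at hcard
    rw [Finset.card_product, Finset.card_range] at hcard
    omega
  · intro c hc
    obtain ⟨h1, h2, h3, h4⟩ := key c hc
    rw [Finset.mem_coe, Finset.mem_product, Finset.mem_range]
    exact ⟨h1, by omega⟩
  · intro c1 hc1 c2 hc2 heq
    obtain ⟨_, h12, h13, h14⟩ := key c1 (by simpa using hc1)
    obtain ⟨_, h22, h23, h24⟩ := key c2 (by simpa using hc2)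
    have e1 : (f c1).1 = (f c2).1 := congrArg Prod.fst heq
    have e2 : (f c1).2 = (f c2).2 := congrArg Prod.snd heq
    rw [h14, h24] at e2
    rw [e1] at e2 h12 h13
    simp only [Finset.coe_Icc, Set.mem_Icc] at hc1 hc2
    omega

lemma lower_bound (m t : ℕ) (hm : 1 ≤ m) (hn : 2 ≤ 3 * t + 2)
    (D : Finset (Fin m × Fin (3 * t + 2)))
    (hD : (((⊤ : SimpleGraph (Fin m)) ⊠ pathGraph (3 * t + 2)).deleteEdges
        ↑(delZ m (3 * t + 2) hn)).IsDominatingSet ↑D) :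
    t + 2 ≤ D.card := by
  classical
  have hdom : ∀ v : Fin m × Fin (3 * t + 2), v ∈ D ∨ ∃ u ∈ D,
      u ≠ v ∧ ((u.2 : ℕ) = v.2 ∨ (u.2 : ℕ) + 1 = v.2 ∨ (v.2 : ℕ) + 1 = u.2) ∧
        ¬(u.1 = v.1 ∧ (((u.2 : ℕ) = 0 ∧ (v.2 : ℕ) = 1) ∨ ((u.2 : ℕ) = 1 ∧ (v.2 : ℕ) = 0))) := by
    intro v
    rcases hD v with h | ⟨u, hu, hadj⟩
    · exact Or.inl (by simpa using h)
    · exact Or.inr ⟨u, by simpa using hu, (G'_adj hn).1 hadj⟩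
  set A : Finset (Fin m × Fin (3 * t + 2)) := D.filter (fun d => (d.2 : ℕ) ≤ 1) with hA
  set B : Finset (Fin m × Fin (3 * t + 2)) := D.filter (fun d => ¬ (d.2 : ℕ) ≤ 1) with hB
  have hAB : A.card + B.card = D.card := Finset.card_filter_add_card_filter_not _
  have hBmem : ∀ u ∈ D, 2 ≤ (u.2 : ℕ) → u ∈ B := by
    intro u hu h
    exact Finset.mem_filter.2 ⟨hu, by omega⟩
  have hA1 : A.Nonempty := by
    rcases hdom (⟨0, hm⟩, ⟨0, by omega⟩) with h | ⟨u, hu, _, hcol, _⟩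
    · exact ⟨_, Finset.mem_filter.2 ⟨h, by norm_num⟩⟩
    · refine ⟨u, Finset.mem_filter.2 ⟨hu, ?_⟩⟩
      simp only [Fin.val_mk] at hcol
      show (u.2 : ℕ) ≤ 1
      omega
  rcases le_or_gt 2 A.card with hA2 | hA2
  · -- case |A| ≥ 2 : columns 3 .. 3t+1 counted in B
    have hcnt := count_lemma B (fun d => (d.2 : ℕ)) 3 (3 * t + 1) ?_
    · omega
    intro c hc1 hc2
    beta_reduce
    rcases hdom (⟨0, hm⟩, ⟨c, by omega⟩) with h | ⟨u, hu, _, hcol, _⟩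
    · exact ⟨_, hBmem _ h (by simp only [Fin.val_mk]; omega),
        by simp only [Fin.val_mk]; omega, by simp only [Fin.val_mk]; omega⟩
    · simp only [Fin.val_mk] at hcol
      exact ⟨u, hBmem u hu (by omega), by omega, by omega⟩
  · -- case |A| = 1
    obtain ⟨d, hd⟩ := Finset.card_eq_one.1 (le_antisymm (by omega) hA1.card_pos)
    have hdA : d ∈ A := hd ▸ Finset.mem_singleton_self d
    have hdD : d ∈ D := (Finset.mem_filter.1 hdA).1
    have hdcol : (d.2 : ℕ) ≤ 1 := (Finset.mem_filter.1 hdA).2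
    have hmemA : ∀ u ∈ D, (u.2 : ℕ) ≤ 1 → u = d := by
      intro u hu h
      have : u ∈ A := Finset.mem_filter.2 ⟨hu, h⟩
      rwa [hd, Finset.mem_singleton] at this
    have hAcard : A.card = 1 := by rw [hd]; simp
    rcases Nat.le_one_iff_eq_zero_or_eq_one.1 hdcol with hd0 | hd1
    · -- d is at column 0; consider w = (d.1, 1)
      have hw : ∃ u ∈ D, (u.2 : ℕ) = 2 := by
        rcases hdom (d.1, ⟨1, by omega⟩) with h | ⟨u, hu, hne, hcol, hdel⟩
        · exfalso
          have h2 := hmemA _ h (by norm_num)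
          have h3 : ((⟨1, by omega⟩ : Fin (3 * t + 2)) : ℕ) = (d.2 : ℕ) :=
            congrArg (fun x => (x.2 : ℕ)) h2
          simp only [Fin.val_mk] at h3
          omega
        · refine ⟨u, hu, ?_⟩
          simp only [Fin.val_mk] at hcol
          by_contra hne2
          have hu1 : (u.2 : ℕ) ≤ 1 := by omega
          have := hmemA u hu hu1
          subst this
          exact hdel ⟨rfl, Or.inl ⟨hd0, rfl⟩⟩
      obtain ⟨e, heD, hecol⟩ := hw
      have hcnt := count_lemma B (fun d => (d.2 : ℕ)) 1 (3 * t + 1) ?_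
      · omega
      intro c hc1 hc2
      beta_reduce
      rcases Nat.eq_or_lt_of_le hc1 with hc1' | hc1'
      · exact ⟨e, hBmem e heD (by omega), by omega, by omega⟩
      · rcases hdom (⟨0, hm⟩, ⟨c, by omega⟩) with h | ⟨u, hu, _, hcol, _⟩
        · exact ⟨_, hBmem _ h (by simp only [Fin.val_mk]; omega),
            by simp only [Fin.val_mk]; omega, by simp only [Fin.val_mk]; omega⟩
        · simp only [Fin.val_mk] at hcol
          have hu2 : 2 ≤ (u.2 : ℕ) := by
            rcases le_or_gt (u.2 : ℕ) 1 with h1 | h1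
            · have := hmemA u hu h1
              subst this
              omega
            · omega
          exact ⟨u, hBmem u hu hu2, by omega, by omega⟩
    · -- d is at column 1; w = (d.1, 0) cannot be dominated: contradiction
      exfalso
      rcases hdom (d.1, ⟨0, by omega⟩) with h | ⟨u, hu, hne, hcol, hdel⟩
      · have h2 := hmemA _ h (by norm_num)
        have h3 : ((⟨0, by omega⟩ : Fin (3 * t + 2)) : ℕ) = (d.2 : ℕ) :=
          congrArg (fun x => (x.2 : ℕ)) h2
        simp only [Fin.val_mk] at h3
        omega
      · simp only [Fin.val_mk] at hcol
        have hu1 : (u.2 : ℕ) ≤ 1 := by omega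
        have := hmemA u hu hu1
        subst this
        exact hdel ⟨rfl, Or.inr ⟨hd1, rfl⟩⟩

lemma upper_bound (m t : ℕ) (hm : 1 ≤ m) :
    ∃ D : Finset (Fin m × Fin (3 * t + 2)), D.card = t + 1 ∧
      ((⊤ : SimpleGraph (Fin m)) ⊠ pathGraph (3 * t + 2)).IsDominatingSet ↑D := by
  classical
  refine ⟨(Finset.univ : Finset (Fin (t + 1))).image
      (fun k : Fin (t + 1) => ((⟨0, hm⟩ : Fin m), (⟨3 * (k : ℕ) + 1, by omega⟩ : Fin (3 * t + 2)))), ?_, ?_⟩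
  · rw [Finset.card_image_of_injective _ ?_, Finset.card_univ, Fintype.card_fin]
    intro k1 k2 h
    have := congrArg (fun x : Fin m × Fin (3 * t + 2) => (x.2 : ℕ)) h
    simp only [Fin.val_mk] at this
    exact Fin.ext (by omega)
  · intro v
    have hv3 : (v.2 : ℕ) < 3 * t + 2 := v.2.isLt
    obtain ⟨k, hk1, hk2⟩ : ∃ k, k ≤ t ∧ ((v.2 : ℕ) ≤ 3 * k + 2 ∧ 3 * k ≤ (v.2 : ℕ)) :=
      ⟨(v.2 : ℕ) / 3, by omega, by omega⟩
    set u : Fin m × Fin (3 * t + 2) := (⟨0, hm⟩, ⟨3 * k + 1, by omega⟩) with hu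
    have humem : u ∈ ((Finset.univ : Finset (Fin (t + 1))).image
        (fun k : Fin (t + 1) => ((⟨0, hm⟩ : Fin m), (⟨3 * (k : ℕ) + 1, by omega⟩ : Fin (3 * t + 2)))) :
          Finset (Fin m × Fin (3 * t + 2))) :=
      Finset.mem_image.2 ⟨⟨k, by omega⟩, Finset.mem_univ _, rfl⟩
    rcases eq_or_ne u v with h | h
    · exact Or.inl (by rw [← h]; exact Finset.mem_coe.2 humem)
    · refine Or.inr ⟨u, Finset.mem_coe.2 humem, strong_adj.2 ⟨h, ?_⟩⟩
      have h2 : (u.2 : ℕ) = 3 * k + 1 := rfl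
      omega

/-- **Lemma.** If `m ≥ 1` and `n ≡ 2 (mod 3)` (`n ≥ 2`), then `b(K_m ⊠ P_n) ≤ m`. -/
theorem bondage_le_of_mod_three_eq_two (m n : ℕ) (hm : 1 ≤ m) (hn : 2 ≤ n)
    (h3 : n % 3 = 2) :
    ((⊤ : SimpleGraph (Fin m)) ⊠ pathGraph n).bondageNumber ≤ m := by
  classical
  obtain ⟨t, rfl⟩ : ∃ t, n = 3 * t + 2 := ⟨n / 3, by omega⟩
  set G := (⊤ : SimpleGraph (Fin m)) ⊠ pathGraph (3 * t + 2) with hG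
  set Z := delZ m (3 * t + 2) hn with hZ
  apply Nat.sInf_le
  refine ⟨Z, ?_, ?_, ?_⟩
  · -- card Z = m
    rw [hZ, delZ, Finset.card_image_of_injective _ ?_, Finset.card_univ, Fintype.card_fin]
    intro i j h
    rw [Sym2.eq_iff] at h
    rcases h with ⟨h1, _⟩ | ⟨h1, _⟩
    · exact (Prod.ext_iff.1 h1).1
    · exfalso
      have := congrArg (fun x : Fin m × Fin (3 * t + 2) => (x.2 : ℕ)) h1
      simp at this
  · -- Z ⊆ edgeSet
    intro z hz
    rw [Finset.mem_coe, hZ, delZ, Finset.mem_image] at hz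
    obtain ⟨i, _, rfl⟩ := hz
    rw [SimpleGraph.mem_edgeSet]
    apply strong_adj.2
    constructor
    · intro h
      have := congrArg (fun x : Fin m × Fin (3 * t + 2) => (x.2 : ℕ)) h
      simp at this
    · simp
  · -- domination number increases
    obtain ⟨D0, hD0card, hD0⟩ := upper_bound m t hm
    have hup : G.dominationNumber ≤ t + 1 := Nat.sInf_le ⟨D0, hD0card, hD0⟩
    have hne : {k | ∃ D : Finset (Fin m × Fin (3 * t + 2)), D.card = k ∧
        (G.deleteEdges ↑Z).IsDominatingSet ↑D}.Nonempty := by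
      refine ⟨(Finset.univ : Finset (Fin m × Fin (3 * t + 2))).card, Finset.univ, rfl, ?_⟩
      intro v
      exact Or.inl (by simp)
    have hmem := Nat.sInf_mem hne
    obtain ⟨D, hDcard, hDdom⟩ := hmem
    have hlow := lower_bound m t hm hn D hDdom
    have : t + 2 ≤ (G.deleteEdges ↑Z).dominationNumber := by
      rw [SimpleGraph.dominationNumber, ← hDcard] at *
      omega
    omega
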